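/- Let ω be a positive linear functional on A, H_ω := A/J_ω with projection f ↦ Ψ_f and inner product ⟨Ψ_f, Ψ_g⟩ := ω(f̄*g). Then π_ω(f)Ψ_g := Ψ_{f*g} is well defined and is a representation of A on H_ω (π_ω(f*g) = π_ω(f)∘π_ω(g), π_ω is ℂ((λ))-linear in f), and it is a *-representation: ⟨Ψ_h, π_ω(f)Ψ_g⟩ = ⟨π_ω(f̄)Ψ_h, Ψ_g⟩ for all f, g, h ∈ A. -/

import Mathlib

/-- Coefficientwise complex conjugation on `ℂ((λ))`. -/
noncomputable def conjL (x : LaurentSeries ℂ) : LaurentSeries ℂ where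
  coeff := fun m => (starRingEnd ℂ) (x.coeff m)
  isPWO_support' := by
    refine x.isPWO_support.mono ?_
    intro m hm
    simp only [Function.mem_support, ne_eq, map_eq_zero] at hm ⊢
    exact hm

/-- An element of `ℂ((λ))` lies in `ℝ((λ))` and is `≥ 0` there: all coefficients are
real, and either it is `0` or the coefficient of the lowest nonvanishing power of `λ`
is positive. -/
noncomputable def IsRealNonneg (x : LaurentSeries ℂ) : Prop :=
  (∀ m, (x.coeff m).im = 0) ∧ (x = 0 ∨ 0 < (x.coeff x.order).re)

lemma singleMulCoeff (r : ℂ) (y : LaurentSeries ℂ) (b m : ℤ) :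
    (HahnSeries.single b r * y).coeff m = r * y.coeff (m - b) := by
  have := HahnSeries.coeff_single_mul_add (r := r) (x := y) (a := m - b) (b := b)
  rwa [sub_add_cancel] at this

lemma conjL_single (N : ℤ) : conjL (HahnSeries.single N (-1 : ℂ)) = HahnSeries.single N (-1 : ℂ) := by
  ext m
  simp [conjL, HahnSeries.coeff_single]

lemma keyLemma (s q : LaurentSeries ℂ) (hs : IsRealNonneg s) (hq : IsRealNonneg q)
    (h : ∀ N : ℤ, IsRealNonneg (HahnSeries.single N (-1 : ℂ) * s
      + HahnSeries.single N (-1 : ℂ) * s + HahnSeries.single (N + N) (1 : ℂ) * q)) :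
    s = 0 := by
  by_contra hs0
  set N : ℤ := s.order - q.order + 1 with hN
  set x := HahnSeries.single N (-1 : ℂ) * s + HahnSeries.single N (-1 : ℂ) * s
      + HahnSeries.single (N + N) (1 : ℂ) * q with hx
  have hqc : ∀ m : ℤ, m ≤ N + s.order → q.coeff (m - (N + N)) = 0 := by
    intro m hm
    by_cases hq0 : q = 0
    · simp [hq0]
    · apply HahnSeries.coeff_eq_zero_of_lt_order
      omega
  have hcoeff : ∀ m : ℤ, x.coeff m =
      (-1) * s.coeff (m - N) + (-1) * s.coeff (m - N) + 1 * q.coeff (m - (N + N)) := by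
    intro m
    simp only [hx, HahnSeries.coeff_add, singleMulCoeff]
  have hclow : ∀ m : ℤ, m < N + s.order → x.coeff m = 0 := by
    intro m hm
    rw [hcoeff]
    rw [HahnSeries.coeff_eq_zero_of_lt_order (by omega), hqc m (by omega)]
    ring
  have hcN : x.coeff (N + s.order) = -(2 * s.coeff s.order) := by
    rw [hcoeff, hqc _ le_rfl, show N + s.order - N = s.order by ring]
    ring
  have hc0 : s.coeff s.order ≠ 0 := HahnSeries.coeff_order_eq_zero.not.mpr hs0
  have hx0 : x ≠ 0 := by
    intro h0
    rw [h0] at hcN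
    simp at hcN
    exact hc0 (by simpa using hcN)
  have horder : x.order = N + s.order := by
    have h1 : x.order ≤ N + s.order := by
      apply HahnSeries.order_le_of_coeff_ne_zero
      rw [hcN]
      simpa using hc0
    rcases lt_or_eq_of_le h1 with h2 | h2
    · exact absurd (hclow _ h2) (HahnSeries.coeff_order_eq_zero.not.mpr hx0)
    · exact h2
  have hpos' := (h N).2
  rw [← hx] at hpos'
  rcases hpos' with h0 | hp
  · exact hx0 h0
  · rw [horder, hcN] at hp
    have hsre : 0 < (s.coeff s.order).re := by
      rcases hs.2 with h0 | hp'
      · exact absurd h0 hs0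
      · exact hp'
    simp [Complex.mul_re] at hp
    linarith

/-- The GNS representation `π_ω(f) Ψ_g := Ψ_{f*g}` on `H_ω = A ⧸ J_ω` is well
defined, is a `ℂ((λ))`-linear representation of `A`, and is a `*`-representation:
`⟨Ψ_h, π_ω(f)Ψ_g⟩ = ⟨π_ω(f̄)Ψ_h, Ψ_g⟩`. -/
theorem gns_representation
    {A : Type*} [Ring A] [Algebra (LaurentSeries ℂ) A] [StarRing A]
    (hsm : ∀ (c : LaurentSeries ℂ) (a : A), star (c • a) = conjL c • star a)
    (ω : A →ₗ[LaurentSeries ℂ] LaurentSeries ℂ)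
    (hpos : ∀ f : A, IsRealNonneg (ω (star f * f)))
    (J : Submodule (LaurentSeries ℂ) A)
    (hJ : ∀ f : A, f ∈ J ↔ ω (star f * f) = 0) :
    -- π_ω(f) Ψ_g := Ψ_{f*g} is well defined on the quotient H_ω = A ⧸ J
    (∀ f g g' : A,
        (Submodule.Quotient.mk g : A ⧸ J) = Submodule.Quotient.mk g' →
        (Submodule.Quotient.mk (f * g) : A ⧸ J) = Submodule.Quotient.mk (f * g')) ∧
    -- each π_ω(f) is a linear operator
    (∀ (f g h : A) (c : LaurentSeries ℂ),
        (Submodule.Quotient.mk (f * (c • g + h)) : A ⧸ J)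
          = c • Submodule.Quotient.mk (f * g) + Submodule.Quotient.mk (f * h)) ∧
    -- multiplicativity: π_ω(f*g) = π_ω(f) ∘ π_ω(g)
    (∀ f g h : A,
        (Submodule.Quotient.mk ((f * g) * h) : A ⧸ J)
          = Submodule.Quotient.mk (f * (g * h))) ∧
    -- ℂ((λ))-linearity of f ↦ π_ω(f)
    (∀ (c : LaurentSeries ℂ) (f f' g : A),
        (Submodule.Quotient.mk ((c • f + f') * g) : A ⧸ J)
          = c • Submodule.Quotient.mk (f * g) + Submodule.Quotient.mk (f' * g)) ∧
    -- *-representation property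
    (∀ f g h : A, ω (star h * (f * g)) = ω (star (star f * h) * g)) := by
  refine ⟨?_, ?_, ?_, ?_, ?_⟩
  · -- well-definedness
    intro f g g' hgg'
    rw [Submodule.Quotient.eq] at hgg' ⊢
    rw [← mul_sub]
    set d := g - g' with hd
    rw [hJ] at hgg' ⊢
    set b := (star f * f) * d with hb
    have hsb : star b = star d * (star f * f) := by
      simp [hb, star_mul, mul_assoc]
    have hfd : star (f * d) * (f * d) = star d * b := by
      simp [hb, star_mul, mul_assoc]
    have hbd : star b * d = star d * b := by
      rw [hsb, hb, mul_assoc]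
    rw [hfd]
    refine keyLemma _ (ω (star b * b)) (hfd ▸ hpos (f * d)) (hpos b) ?_
    intro N
    set t : LaurentSeries ℂ := HahnSeries.single N (-1 : ℂ) with ht
    have htt : t * t = HahnSeries.single (N + N) (1 : ℂ) := by
      rw [ht, HahnSeries.single_mul_single, neg_mul_neg, mul_one]
    have key := hpos (d + t • b)
    have expand : star (d + t • b) * (d + t • b)
        = star d * d + t • (star d * b) + (t • (star b * d) + t • t • (star b * b)) := by
      rw [star_add, hsm, conjL_single, ← ht]
      rw [add_mul, mul_add, mul_add, mul_smul_comm, smul_mul_assoc, smul_mul_assoc,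
        mul_smul_comm]
    rw [expand] at key
    simp only [map_add, LinearMap.map_smul, smul_eq_mul, hgg', hbd, zero_add] at key
    rw [← htt]
    convert key using 1
    ring
  · intro f g h c
    rw [mul_add, mul_smul_comm, Submodule.Quotient.mk_add, Submodule.Quotient.mk_smul]
  · intro f g h
    rw [mul_assoc]
  · intro c f f' g
    rw [add_mul, smul_mul_assoc, Submodule.Quotient.mk_add, Submodule.Quotient.mk_smul]
  · intro f g h
    have : star (star f * h) = star h * f := by simp [star_mul]
    rw [this, mul_assoc]
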